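/- (Theorem 3, per-stage form.) Let τ > 1, γ_1 > 0, λ_1 > 0, D_u ≥ 0, R ≥ 0, and for s = 1,…,S set γ_s = γ_1·τ^{1−s} and λ_s = λ_1·τ^{1−s}. Let P : ℝ^d → ℝ have a global minimizer x* with ‖x*‖₂ ≤ R. For each s let P̃_s : ℝ^d → ℝ satisfy P̃_s(x) ≤ P(x) ≤ P̃_s(x) + γ_s·D_u for all x and P̃_s(x) ≤ P̃_{s+1}(x) for all x and all s < S; define H_s(x) = P̃_s(x) + (λ_s/2)‖x‖₂² and let x*_s be a global minimizer of H_s with ‖x*_s‖₂ ≤ R. Let x̃_0, …, x̃_S ∈ ℝ^d and ρ_1,…,ρ_S ∈ (0, 1/τ²] satisfy H_s(x̃_s) − H_s(x*_s) ≤ ρ_s·(H_s(x̃_{s−1}) − H_s(x*_s)) for each s. Then P(x̃_S) − P(x*) ≤ τ^{−2S}·(P(x̃_0) − P(x*) + (λ_1/2)‖x̃_0‖₂² + γ_1·D_u) + (γ_1·D_u + (λ_1/2)·R²)·τ^{2−S}/(τ − 1). -/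

import Mathlib

open Finset

set_option maxHeartbeats 1600000 in
/-- **Theorem 3 (per-stage form).** Let `τ > 1`, `γ_1, λ_1 > 0`, `D_u, R ≥ 0`, and for
`s = 1,…,S` set `γ_s = γ_1 τ^{1−s}`, `λ_s = λ_1 τ^{1−s}`.  Let `P` have a global
minimizer `x*` with `‖x*‖₂ ≤ R`.  For each `s` let `P̃_s` satisfy
`P̃_s(x) ≤ P(x) ≤ P̃_s(x) + γ_s D_u` and `P̃_s ≤ P̃_{s+1}` pointwise (for `s < S`);
define `H_s(x) = P̃_s(x) + (λ_s/2)‖x‖₂²` with global minimizer `x*_s`, `‖x*_s‖₂ ≤ R`.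
If `H_s(x̃_s) − H_s(x*_s) ≤ ρ_s (H_s(x̃_{s−1}) − H_s(x*_s))` with `ρ_s ∈ (0, 1/τ²]`,
then `P(x̃_S) − P(x*) ≤ τ^{−2S}(P(x̃_0) − P(x*) + (λ_1/2)‖x̃_0‖₂² + γ_1 D_u)
+ (γ_1 D_u + (λ_1/2)R²) τ^{2−S}/(τ−1)`. -/
theorem cns_general_convex_per_stage {d : ℕ}
    (τ γ1 lam1 Du R : ℝ) (hτ : 1 < τ) (hγ1 : 0 < γ1) (hlam1 : 0 < lam1)
    (hDu : 0 ≤ Du) (hR : 0 ≤ R) (S : ℕ) (hS : 1 ≤ S)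
    (P : EuclideanSpace ℝ (Fin d) → ℝ) (xstar : EuclideanSpace ℝ (Fin d))
    (hxstar : ∀ y, P xstar ≤ P y) (hxstarR : ‖xstar‖ ≤ R)
    (Pt : ℕ → EuclideanSpace ℝ (Fin d) → ℝ)
    (hsand : ∀ s, 1 ≤ s → s ≤ S → ∀ x,
      Pt s x ≤ P x ∧ P x ≤ Pt s x + γ1 / τ ^ (s - 1) * Du)
    (hmono : ∀ s, 1 ≤ s → s < S → ∀ x, Pt s x ≤ Pt (s + 1) x)
    (H : ℕ → EuclideanSpace ℝ (Fin d) → ℝ)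
    (hH : ∀ s, 1 ≤ s → s ≤ S → ∀ x,
      H s x = Pt s x + lam1 / τ ^ (s - 1) / 2 * ‖x‖ ^ 2)
    (xs : ℕ → EuclideanSpace ℝ (Fin d))
    (hxs : ∀ s, 1 ≤ s → s ≤ S → ∀ y, H s (xs s) ≤ H s y)
    (hxsR : ∀ s, 1 ≤ s → s ≤ S → ‖xs s‖ ≤ R)
    (xt : ℕ → EuclideanSpace ℝ (Fin d)) (ρ : ℕ → ℝ)
    (hρ : ∀ s, 1 ≤ s → s ≤ S → ρ s ∈ Set.Ioc 0 (1 / τ ^ 2))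
    (hred : ∀ s, 1 ≤ s → s ≤ S →
      H s (xt s) - H s (xs s) ≤ ρ s * (H s (xt (s - 1)) - H s (xs s))) :
    P (xt S) - P xstar ≤
      (τ ^ (2 * S))⁻¹ * (P (xt 0) - P xstar + lam1 / 2 * ‖xt 0‖ ^ 2 + γ1 * Du) +
        (γ1 * Du + lam1 / 2 * R ^ 2) * τ ^ ((2 : ℤ) - (S : ℤ)) / (τ - 1) := by
  have hτ0 : (0:ℝ) < τ := lt_trans one_pos hτ
  have hτ1 : (0:ℝ) < τ - 1 := by linarith
  obtain ⟨T, rfl⟩ : ∃ T, S = T + 1 := ⟨S - 1, (Nat.succ_pred_eq_of_pos hS).symm⟩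
  set C : ℝ := γ1 * Du + lam1 / 2 * R ^ 2 with hCdef
  have hC0 : (0:ℝ) ≤ C := by positivity
  set B : ℝ := P (xt 0) - P xstar + lam1 / 2 * ‖xt 0‖ ^ 2 + γ1 * Du with hBdef
  have key : ∀ t : ℕ, t + 1 ≤ T + 1 →
      H (t+1) (xt (t+1)) - H (t+1) (xs (t+1)) ≤
        (τ ^ (2*t+2))⁻¹ * B + C / (τ ^ t * (τ - 1)) := by
    intro t
    induction t with
    | zero =>
      intro _
      have h1S : 1 ≤ T + 1 := Nat.le_add_left 1 T
      obtain ⟨hρ0, hρ2⟩ := hρ 1 le_rfl h1S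
      have hred1 := hred 1 le_rfl h1S
      norm_num at hred1
      have e0 := hH 1 le_rfl h1S (xt 0)
      have e1 := hH 1 le_rfl h1S (xs 1)
      have s0 := (hsand 1 le_rfl h1S (xt 0)).1
      have s1 := (hsand 1 le_rfl h1S (xs 1)).2
      norm_num at e0 e1 s1
      have hx := hxstar (xs 1)
      have hmin := hxs 1 le_rfl h1S (xt 0)
      have hn : (0:ℝ) ≤ lam1 / 2 * ‖xs 1‖ ^ 2 := by positivity
      have hXB : H 1 (xt 0) - H 1 (xs 1) ≤ B := by
        rw [e0, e1, hBdef]; linarith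
      have hX0 : (0:ℝ) ≤ H 1 (xt 0) - H 1 (xs 1) := by linarith
      have step1 : H 1 (xt 1) - H 1 (xs 1) ≤ 1 / τ ^ 2 * B := by
        calc H 1 (xt 1) - H 1 (xs 1) ≤ ρ 1 * (H 1 (xt 0) - H 1 (xs 1)) := by linarith
          _ ≤ 1 / τ ^ 2 * (H 1 (xt 0) - H 1 (xs 1)) :=
              mul_le_mul_of_nonneg_right hρ2 hX0
          _ ≤ 1 / τ ^ 2 * B := by
              apply mul_le_mul_of_nonneg_left hXB (by positivity)
      have hCterm : (0:ℝ) ≤ C / (τ ^ 0 * (τ - 1)) := by positivity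
      calc H 1 (xt 1) - H 1 (xs 1) ≤ 1 / τ ^ 2 * B := step1
        _ ≤ (τ ^ (2*0+2))⁻¹ * B + C / (τ ^ 0 * (τ - 1)) := by
            norm_num
            exact div_nonneg hC0 hτ1.le
    | succ n ih =>
      intro h
      have hn1 : n + 1 ≤ T + 1 := by omega
      have hn2 : n + 2 ≤ T + 1 := by omega
      have hlt : n + 1 < T + 1 := by omega
      have ihn := ih hn1
      obtain ⟨hρ0, hρ2⟩ := hρ (n+2) (by omega) hn2
      have hred2 := hred (n+2) (by omega) hn2
      have hsub : n + 2 - 1 = n + 1 := rfl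
      rw [hsub] at hred2
      -- equalities for H
      have eA := hH (n+2) (by omega) hn2 (xt (n+1))
      have eB' := hH (n+2) (by omega) hn2 (xs (n+2))
      have eC' := hH (n+1) (by omega) hn1 (xt (n+1))
      have eD := hH (n+1) (by omega) hn1 (xs (n+2))
      have eE := hH (n+1) (by omega) hn1 (xs (n+1))
      have hsub2 : n + 2 - 1 = n + 1 := rfl
      have hsub1 : n + 1 - 1 = n := rfl
      rw [hsub2] at eA eB'
      rw [hsub1] at eC' eD eE
      -- h1 : H(n+2)(xt(n+1)) ≤ H(n+1)(xt(n+1)) + γ1/τ^n * Du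
      have sA := (hsand (n+2) (by omega) hn2 (xt (n+1))).1
      have sB := (hsand (n+1) (by omega) hn1 (xt (n+1))).2
      rw [hsub1] at sB
      have hmul : lam1 / τ ^ (n+1) / 2 * ‖xt (n+1)‖ ^ 2 ≤
          lam1 / τ ^ n / 2 * ‖xt (n+1)‖ ^ 2 := by
        apply mul_le_mul_of_nonneg_right _ (by positivity)
        have hple : τ ^ n ≤ τ ^ (n+1) := pow_le_pow_right₀ hτ.le (Nat.le_succ n)
        have hd : lam1 / τ ^ (n+1) ≤ lam1 / τ ^ n :=
          div_le_div_of_nonneg_left hlam1.le (pow_pos hτ0 n) hple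
        linarith
      have h1 : H (n+2) (xt (n+1)) ≤ H (n+1) (xt (n+1)) + γ1 / τ ^ n * Du := by
        rw [eA, eC']; linarith
      -- h2 : H(n+1)(xs(n+1)) ≤ H(n+2)(xs(n+2)) + lam1/τ^n/2 * R^2
      have hmin1 := hxs (n+1) (by omega) hn1 (xs (n+2))
      have hmonon := hmono (n+1) (by omega) hlt (xs (n+2))
      have hRn : ‖xs (n+2)‖ ^ 2 ≤ R ^ 2 := by
        have := hxsR (n+2) (by omega) hn2
        exact pow_le_pow_left₀ (norm_nonneg _) this 2
      have hmul2 : lam1 / τ ^ n / 2 * ‖xs (n+2)‖ ^ 2 ≤ lam1 / τ ^ n / 2 * R ^ 2 := by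
        apply mul_le_mul_of_nonneg_left hRn (by positivity)
      have hn2pos : (0:ℝ) ≤ lam1 / τ ^ (n+1) / 2 * ‖xs (n+2)‖ ^ 2 := by positivity
      have h2 : H (n+1) (xs (n+1)) ≤ H (n+2) (xs (n+2)) + lam1 / τ ^ n / 2 * R ^ 2 := by
        have := eD
        rw [eB']
        calc H (n+1) (xs (n+1)) ≤ H (n+1) (xs (n+2)) := hmin1
          _ = Pt (n+1) (xs (n+2)) + lam1 / τ ^ n / 2 * ‖xs (n+2)‖ ^ 2 := eD
          _ ≤ Pt (n+2) (xs (n+2)) + lam1 / τ ^ (n+1) / 2 * ‖xs (n+2)‖ ^ 2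
              + lam1 / τ ^ n / 2 * R ^ 2 := by linarith
      -- combine: paren bound
      have hCsplit : C / τ ^ n = γ1 / τ ^ n * Du + lam1 / τ ^ n / 2 * R ^ 2 := by
        rw [hCdef]; field_simp
      have hparen : H (n+2) (xt (n+1)) - H (n+2) (xs (n+2)) ≤
          (H (n+1) (xt (n+1)) - H (n+1) (xs (n+1))) + C / τ ^ n := by
        rw [hCsplit]; linarith
      have hparen0 : (0:ℝ) ≤ H (n+2) (xt (n+1)) - H (n+2) (xs (n+2)) := by
        have := hxs (n+2) (by omega) hn2 (xt (n+1)); linarith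
      have step : H (n+2) (xt (n+2)) - H (n+2) (xs (n+2)) ≤
          1 / τ ^ 2 * ((τ ^ (2*n+2))⁻¹ * B + C / (τ ^ n * (τ - 1)) + C / τ ^ n) := by
        calc H (n+2) (xt (n+2)) - H (n+2) (xs (n+2))
            ≤ ρ (n+2) * (H (n+2) (xt (n+1)) - H (n+2) (xs (n+2))) := hred2
          _ ≤ 1 / τ ^ 2 * (H (n+2) (xt (n+1)) - H (n+2) (xs (n+2))) :=
              mul_le_mul_of_nonneg_right hρ2 hparen0
          _ ≤ 1 / τ ^ 2 * ((τ ^ (2*n+2))⁻¹ * B + C / (τ ^ n * (τ - 1)) + C / τ ^ n) := by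
              apply mul_le_mul_of_nonneg_left _ (by positivity)
              linarith
      have hEq : 1 / τ ^ 2 * ((τ ^ (2*n+2))⁻¹ * B + C / (τ ^ n * (τ - 1)) + C / τ ^ n)
          = (τ ^ (2*(n+1)+2))⁻¹ * B + C / (τ ^ (n+1) * (τ - 1)) := by
        have hτne : τ ≠ 0 := ne_of_gt hτ0
        have hτ1ne : τ - 1 ≠ 0 := ne_of_gt hτ1
        field_simp
        ring
      rw [hEq] at step
      exact step
  -- final assembly
  have hkey := key T le_rfl
  have hTS : T + 1 ≤ T + 1 := le_rfl
  have hsub : T + 1 - 1 = T := rfl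
  have eF := hH (T+1) (by omega) hTS (xt (T+1))
  have eG := hH (T+1) (by omega) hTS xstar
  have eE := hH (T+1) (by omega) hTS (xs (T+1))
  rw [hsub] at eF eG eE
  have sF := (hsand (T+1) (by omega) hTS (xt (T+1))).2
  rw [hsub] at sF
  have sG := (hsand (T+1) (by omega) hTS xstar).1
  have hminstar := hxs (T+1) (by omega) hTS xstar
  have hRstar : ‖xstar‖ ^ 2 ≤ R ^ 2 := pow_le_pow_left₀ (norm_nonneg _) hxstarR 2
  have hmul3 : lam1 / τ ^ T / 2 * ‖xstar‖ ^ 2 ≤ lam1 / τ ^ T / 2 * R ^ 2 :=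
    mul_le_mul_of_nonneg_left hRstar (by positivity)
  have hnF : (0:ℝ) ≤ lam1 / τ ^ T / 2 * ‖xt (T+1)‖ ^ 2 := by positivity
  have hCsplit : C / τ ^ T = γ1 / τ ^ T * Du + lam1 / τ ^ T / 2 * R ^ 2 := by
    rw [hCdef]; field_simp
  have hfinal : P (xt (T+1)) - P xstar ≤
      (H (T+1) (xt (T+1)) - H (T+1) (xs (T+1))) + C / τ ^ T := by
    rw [hCsplit]
    have h3 : P (xt (T+1)) ≤ H (T+1) (xt (T+1)) + γ1 / τ ^ T * Du := by
      rw [eF]; linarith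
    have h4 : H (T+1) (xs (T+1)) ≤ P xstar + lam1 / τ ^ T / 2 * R ^ 2 := by
      have : H (T+1) xstar ≤ P xstar + lam1 / τ ^ T / 2 * R ^ 2 := by
        rw [eG]; linarith
      linarith
    linarith
  have hRHSeq : (τ ^ (2 * (T+1)))⁻¹ * B + C * τ ^ ((2 : ℤ) - ((T+1 : ℕ) : ℤ)) / (τ - 1)
      = (τ ^ (2*T+2))⁻¹ * B + (C / (τ ^ T * (τ - 1)) + C / τ ^ T) := by
    have hτne : τ ≠ 0 := ne_of_gt hτ0
    have hτ1ne : τ - 1 ≠ 0 := ne_of_gt hτ1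
    have hz : τ ^ ((2 : ℤ) - ((T+1 : ℕ) : ℤ)) = τ * (τ ^ T)⁻¹ := by
      push_cast
      rw [show (2 : ℤ) - ((T : ℤ) + 1) = 1 - (T : ℤ) by ring,
        zpow_sub₀ hτne, zpow_one, zpow_natCast]
      ring
    rw [hz, show 2 * (T + 1) = 2 * T + 2 by ring]
    field_simp
    ring
  rw [hRHSeq]
  linarith
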